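/- Let S ⊆ ℝ^M be a set whose intersection with every compact set is finite, let n be a real number, and let ν be a Borel measure on ℝ^M, finite on compact sets, such that the rescaled counting measures of S converge vaguely with order n to ν. Let d > 0 be a real number and let g : ℝ^M → [0,∞) be continuous with g(t·x) = t^d·g(x) for all t ≥ 0 and x ∈ ℝ^M, and suppose there is a constant c ≥ 0 with g(x) = c for every x ∈ S. Then ν({x ∈ ℝ^M : g(x) > 0}) = 0, i.e. ν is supported on the zero set of g. -/

import Mathlib

open MeasureTheory Set Filter
open scoped Pointwise ENNReal BigOperators

/-- The rescaled counting measures of `S ⊆ ℝ^M` converge vaguely with order `n` to `ν`: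
for every continuous compactly supported `f : ℝ^M → ℝ`,
`lim_{L→∞} L^(-n) ∑_{x ∈ S} f (L⁻¹ • x) = ∫ f dν`, the limit over real `L → ∞`. -/
def VagueLimit {M : ℕ} (S : Set (Fin M → ℝ)) (n : ℝ) (ν : Measure (Fin M → ℝ)) : Prop :=
  ∀ f : (Fin M → ℝ) → ℝ, Continuous f → HasCompactSupport f →
    Tendsto (fun L : ℝ => L ^ (-n) * ∑ᶠ x ∈ S, f (L⁻¹ • x)) atTop
      (nhds (∫ x, f x ∂ν))

/-- Let `S ⊆ ℝ^M` intersect every compact set in a finite set, let `n`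
be real, and let `ν` be a Borel measure on `ℝ^M`, finite on compact sets, such that the
rescaled counting measures of `S` converge vaguely with order `n` to `ν`.  Let `d > 0` be
real and `g : ℝ^M → [0,∞)` continuous with `g (t • x) = t^d · g x` for `t ≥ 0`, taking a
constant value `c ≥ 0` on `S`.  Then `ν {x | g x > 0} = 0`. -/
theorem stmt9 (M : ℕ) (S : Set (Fin M → ℝ))
    (hS : ∀ K : Set (Fin M → ℝ), IsCompact K → (S ∩ K).Finite)
    (n : ℝ) (ν : Measure (Fin M → ℝ))
    (hfin : ∀ K : Set (Fin M → ℝ), IsCompact K → ν K < ⊤)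
    (hvague : VagueLimit S n ν)
    (d : ℝ) (hd : 0 < d)
    (g : (Fin M → ℝ) → ℝ) (hg0 : ∀ x, 0 ≤ g x) (hgc : Continuous g)
    (hgh : ∀ t : ℝ, 0 ≤ t → ∀ x : Fin M → ℝ, g (t • x) = t ^ d * g x)
    (c : ℝ) (hc : 0 ≤ c) (hgS : ∀ x ∈ S, g x = c) :
    ν {x : Fin M → ℝ | 0 < g x} = 0 := by
  haveI : IsFiniteMeasureOnCompacts ν := ⟨fun {K} hK => hfin K hK⟩
  -- Step 1: for any continuous compactly supported φ, `∫ φ * g dν = 0`.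
  have key : ∀ φ : (Fin M → ℝ) → ℝ, Continuous φ → HasCompactSupport φ →
      ∫ x, φ x * g x ∂ν = 0 := by
    intro φ hφc hφs
    have hfg : Continuous (fun x => φ x * g x) := hφc.mul hgc
    have hfs : HasCompactSupport (fun x => φ x * g x) := hφs.mul_right
    have h1 := hvague _ hfg hfs
    have h2 := hvague φ hφc hφs
    have heq : ∀ᶠ L : ℝ in atTop,
        L ^ (-n) * ∑ᶠ x ∈ S, (φ (L⁻¹ • x) * g (L⁻¹ • x))
          = (L⁻¹ ^ d * c) * (L ^ (-n) * ∑ᶠ x ∈ S, φ (L⁻¹ • x)) := by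
      filter_upwards [eventually_gt_atTop (0 : ℝ)] with L hL
      have hKcpt : IsCompact (L • tsupport φ) := hφs.smul L
      have hfin' : (S ∩ Function.support (fun x => φ (L⁻¹ • x))).Finite := by
        refine (hS _ hKcpt).subset ?_
        rintro x ⟨hxS, hx⟩
        refine ⟨hxS, ⟨L⁻¹ • x, subset_tsupport φ hx, ?_⟩⟩
        simp [smul_smul, mul_inv_cancel₀ hL.ne']
      have hcongr : ∑ᶠ x ∈ S, (φ (L⁻¹ • x) * g (L⁻¹ • x))
          = ∑ᶠ x ∈ S, (L⁻¹ ^ d * c) * φ (L⁻¹ • x) := by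
        refine finsum_mem_congr rfl fun x hx => ?_
        rw [hgh L⁻¹ (by positivity) x, hgS x hx]; ring
      have hdistrib : (L⁻¹ ^ d * c) * (∑ᶠ x ∈ S, φ (L⁻¹ • x))
          = ∑ᶠ x ∈ S, (L⁻¹ ^ d * c) * φ (L⁻¹ • x) :=
        (AddMonoidHom.mulLeft (L⁻¹ ^ d * c)).map_finsum_mem' hfin'
      rw [hcongr, ← hdistrib]
      ring
    have hL1 : Tendsto (fun L : ℝ => L⁻¹ ^ d * c) atTop (nhds 0) := by
      have h0 : Tendsto (fun L : ℝ => L⁻¹ ^ d) atTop (nhds 0) := by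
        have hcont : ContinuousAt (fun x : ℝ => x ^ d) 0 :=
          Real.continuousAt_rpow_const 0 d (Or.inr hd.le)
        have := hcont.tendsto.comp tendsto_inv_atTop_zero
        simpa [Real.zero_rpow hd.ne', Function.comp_def] using this
      simpa using h0.mul_const c
    have h3 : Tendsto (fun L : ℝ =>
        (L⁻¹ ^ d * c) * (L ^ (-n) * ∑ᶠ x ∈ S, φ (L⁻¹ • x))) atTop (nhds 0) := by
      simpa using hL1.mul h2
    have h4 : Tendsto (fun L : ℝ =>
        L ^ (-n) * ∑ᶠ x ∈ S, (φ (L⁻¹ • x) * g (L⁻¹ • x))) atTop (nhds 0) :=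
      h3.congr' (heq.mono fun L hL => hL.symm)
    exact tendsto_nhds_unique h1 h4
  -- Step 2: `ν ({0 < g} ∩ closedBall 0 R) = 0` for every `R : ℕ`.
  have ball0 : ∀ R : ℕ, ν ({x : Fin M → ℝ | 0 < g x} ∩ Metric.closedBall 0 R) = 0 := by
    intro R
    obtain ⟨φ, hφ1, -, hφs, hφ01⟩ :=
      exists_continuous_one_zero_of_isCompact (isCompact_closedBall (0 : Fin M → ℝ) R)
        isClosed_empty (disjoint_empty _)
    have hint : ∫ x, φ x * g x ∂ν = 0 := key φ φ.continuous hφs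
    have hintg : Integrable (fun x => φ x * g x) ν :=
      (φ.continuous.mul hgc).integrable_of_hasCompactSupport hφs.mul_right
    have hnn : 0 ≤ fun x => φ x * g x :=
      fun x => mul_nonneg (hφ01 x).1 (hg0 x)
    have hae : (fun x => φ x * g x) =ᵐ[ν] 0 :=
      ((integral_eq_zero_iff_of_nonneg hnn hintg).mp hint)
    have hnull : ν {x : Fin M → ℝ | φ x * g x ≠ 0} = 0 := by
      have := hae
      rw [Filter.EventuallyEq, ae_iff] at this
      simpa using this
    refine measure_mono_null ?_ hnull
    rintro x ⟨hgx, hxB⟩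
    have : φ x = 1 := hφ1 hxB
    simp only [mem_setOf_eq, this, one_mul]
    exact ne_of_gt hgx
  -- Step 3: conclude by countable union.
  have hcover : {x : Fin M → ℝ | 0 < g x}
      ⊆ ⋃ R : ℕ, ({x : Fin M → ℝ | 0 < g x} ∩ Metric.closedBall 0 R) := by
    intro x hx
    obtain ⟨R, hR⟩ := exists_nat_ge ‖x‖
    exact mem_iUnion.mpr ⟨R, hx, by simpa [Metric.mem_closedBall, dist_zero_right] using hR⟩
  exact measure_mono_null hcover (measure_iUnion_null fun R => ball0 R)
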